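/- Let C_ℓ (ℓ even, ℓ ≥ 4) be an outer cycle of a connected bipartite cactus G with exit vertex x, and suppose all vertices of V(C_ℓ) \ {x} have degree 2 in G. Write C_ℓ = x, v₁, …, v_{ℓ−1}, x and let G' = G − {v₂, …, v_{ℓ−2}}. Then γ₂(G) ≤ γ₂(G') + (ℓ−4)/2 and a(G) ≥ a(G') + (ℓ−4)/2; hence γ₂(G') ≤ a(G') + 1 implies γ₂(G) ≤ a(G) + 1. -/

import Mathlib

open Classical Finset
noncomputable section

/-- `S` is a 2-dominating set of `G`: every vertex outside `S` has ≥ 2 neighbors in `S`. -/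
def IsTwoDomSet {V : Type*} [Fintype V] (G : SimpleGraph V) (S : Finset V) : Prop :=
  ∀ v, v ∉ S → 2 ≤ (G.neighborFinset v ∩ S).card

/-- The 2-domination number. -/
noncomputable def gamma2 {V : Type*} [Fintype V] (G : SimpleGraph V) : ℕ :=
  sInf {k | ∃ S : Finset V, IsTwoDomSet G S ∧ S.card = k}

/-- `S` is an annihilation set of `G`: the sum of degrees over `S` is at most `m(G)`. -/
def IsAnnSet {V : Type*} [Fintype V] (G : SimpleGraph V) (S : Finset V) : Prop :=
  ∑ v ∈ S, G.degree v ≤ G.edgeFinset.card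

/-- The annihilation number: the largest size of an annihilation set (equivalently, the
largest `k` such that the sum of the `k` smallest degrees is at most the edge count). -/
noncomputable def annihilation {V : Type*} [Fintype V] (G : SimpleGraph V) : ℕ :=
  sSup {k | ∃ S : Finset V, IsAnnSet G S ∧ S.card = k}

/-- A cactus: a connected graph whose cycles are pairwise edge-disjoint
(two cycles either have the same edge set or share no edge). -/
def IsCactus {V : Type*} (G : SimpleGraph V) : Prop :=
  G.Connected ∧ ∀ (u v : V) (p : G.Walk u u) (q : G.Walk v v),
    p.IsCycle → q.IsCycle →
      (p.edges.toFinset = q.edges.toFinset ∨ ∀ e ∈ p.edges, e ∉ q.edges)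

/-- The distance between two cycles (given as closed walks): the minimum distance
between a vertex of one and a vertex of the other. -/
noncomputable def cycDist {V : Type*} (G : SimpleGraph V) {u v : V}
    (c : G.Walk u u) (d : G.Walk v v) : ℕ :=
  sInf {n | ∃ y ∈ c.support, ∃ z ∈ d.support, G.dist y z = n}

/-- `x` is an exit vertex of the cycle `c`: it realizes the distance from `c`
to some other cycle of `G`. -/
def IsExit {V : Type*} (G : SimpleGraph V) {u : V} (c : G.Walk u u) (x : V) : Prop :=
  x ∈ c.support ∧ ∃ (w : V) (d : G.Walk w w), d.IsCycle ∧
    d.edges.toFinset ≠ c.edges.toFinset ∧ ∃ z ∈ d.support, G.dist x z = cycDist G c d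

/-- An outer cycle: a cycle with at most one exit vertex. -/
def IsOuterCycle {V : Type*} (G : SimpleGraph V) {u : V} (c : G.Walk u u) : Prop :=
  c.IsCycle ∧ ∀ x y, IsExit G c x → IsExit G c y → x = y

/-- There is a sun at the cycle `c`: at every vertex of `c` except one (the exit
vertex, if there is one) there is exactly one pendant vertex attached and no other
tree, i.e. the vertex has degree 3 and a unique leaf neighbor. -/
def HasSunAt {V : Type*} [Fintype V] (G : SimpleGraph V) {u : V} (c : G.Walk u u) : Prop :=
  ∃ x ∈ c.support, (∀ y, IsExit G c y → y = x) ∧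
    ∀ v ∈ c.support, v ≠ x →
      G.degree v = 3 ∧ ∃! w, G.Adj v w ∧ G.degree w = 1

/-- The interior vertices `v₂, …, v_{ℓ−2}` of a cycle `c = x, v₁, …, v_{ℓ−1}, x`. -/
def cycInterior {V : Type*} (G : SimpleGraph V) {x : V} (c : G.Walk x x) : Set V :=
  {y | ∃ i, 2 ≤ i ∧ i ≤ c.length - 2 ∧ y = c.getVert i}

/-- Case 1 of the proof of Theorem 4.1: if all non-exit vertices of an outer cycle
`C_ℓ` (ℓ even, ℓ ≥ 4) of a connected bipartite cactus have degree 2, then deleting the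
interior vertices `v₂, …, v_{ℓ−2}` drops `γ₂` by at most `(ℓ−4)/2` and `a` by at least
`(ℓ−4)/2`; hence `γ₂(G') ≤ a(G') + 1` implies `γ₂(G) ≤ a(G) + 1`. -/


private lemma support_getElem? {V : Type*} {G : SimpleGraph V} {u v : V}
    (p : G.Walk u v) : ∀ i, i ≤ p.length → p.support[i]? = some (p.getVert i) := by
  induction p with
  | nil =>
      intro i hi
      have : i = 0 := by simpa using hi
      subst this; simp
  | cons h q ih =>
      intro i hi
      cases i with
      | zero => simp
      | succ n =>
          simp only [SimpleGraph.Walk.support_cons, List.getElem?_cons_succ,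
            SimpleGraph.Walk.getVert_cons_succ]
          exact ih n (by simpa using hi)

private lemma cycle_getVert_inj {V : Type*} {G : SimpleGraph V} {x : V} {c : G.Walk x x}
    (hc : c.IsCycle) {i j : ℕ} (hi1 : 1 ≤ i) (hi2 : i ≤ c.length)
    (hj1 : 1 ≤ j) (hj2 : j ≤ c.length) (h : c.getVert i = c.getVert j) : i = j := by
  obtain ⟨i', rfl⟩ : ∃ i', i = i' + 1 := ⟨i - 1, by omega⟩
  obtain ⟨j', rfl⟩ : ∃ j', j = j' + 1 := ⟨j - 1, by omega⟩
  have hs := c.support_eq_cons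
  have hlen : c.support.tail.length = c.length := by
    have := c.length_support
    have := c.support.length_tail
    omega
  have hti : c.support.tail[i']? = some (c.getVert (i' + 1)) := by
    have h2 := support_getElem? c (i' + 1) hi2
    rwa [hs, List.getElem?_cons_succ] at h2
  have htj : c.support.tail[j']? = some (c.getVert (j' + 1)) := by
    have h2 := support_getElem? c (j' + 1) hj2
    rwa [hs, List.getElem?_cons_succ] at h2
  have h3 : c.support.tail[i']? = c.support.tail[j']? := by rw [hti, htj, h]
  have := (List.getElem?_inj (by omega) hc.support_nodup).mp h3
  omega

theorem stmt15 {V : Type*} [Fintype V] (G : SimpleGraph V)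
    (hcac : IsCactus G) (hbip : G.Colorable 2)
    (x : V) (c : G.Walk x x) (houter : IsOuterCycle G c)
    (hexit : ∀ y, IsExit G c y → y = x)
    (heven : Even c.length) (hlen : 4 ≤ c.length)
    (hdeg : ∀ y ∈ c.support, y ≠ x → G.degree y = 2) :
    gamma2 G ≤ gamma2 (G.induce (cycInterior G c)ᶜ) + (c.length - 4) / 2 ∧
    annihilation (G.induce (cycInterior G c)ᶜ) + (c.length - 4) / 2 ≤ annihilation G ∧
    (gamma2 (G.induce (cycInterior G c)ᶜ) ≤ annihilation (G.induce (cycInterior G c)ᶜ) + 1 →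
      gamma2 G ≤ annihilation G + 1) := by
  obtain ⟨hcyc, -⟩ := houter
  set ℓ := c.length with hℓdef
  have hev : ℓ % 2 = 0 := Nat.even_iff.mp heven
  set Int : Set V := cycInterior G c with hIntdef
  -- basic facts about the cycle
  have hx0 : c.getVert 0 = x := c.getVert_zero
  have hxl : c.getVert ℓ = x := c.getVert_length
  have hinj1 : ∀ i j, 1 ≤ i → i ≤ ℓ → 1 ≤ j → j ≤ ℓ →
      c.getVert i = c.getVert j → i = j := fun i j hi1 hi2 hj1 hj2 h =>
    cycle_getVert_inj hcyc hi1 hi2 hj1 hj2 h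
  have hnex : ∀ i, 1 ≤ i → i ≤ ℓ - 1 → c.getVert i ≠ x := by
    intro i h1 h2 h
    have := hinj1 i ℓ h1 (by omega) (by omega) le_rfl (by rw [h, hxl])
    omega
  have hinj : ∀ i j, i ≤ ℓ - 1 → j ≤ ℓ - 1 → c.getVert i = c.getVert j → i = j := by
    intro i j hi hj h
    rcases Nat.eq_zero_or_pos i with rfl | hi1
    · rcases Nat.eq_zero_or_pos j with rfl | hj1
      · rfl
      · exact absurd (h.symm.trans hx0) (hnex j hj1 hj)
    · rcases Nat.eq_zero_or_pos j with rfl | hj1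
      · exact absurd (h.trans hx0) (hnex i hi1 hi)
      · exact hinj1 i j hi1 (by omega) hj1 (by omega) h
  have hmem : ∀ i, i ≤ ℓ → c.getVert i ∈ c.support := fun i hi =>
    SimpleGraph.Walk.mem_support_iff_exists_getVert.mpr ⟨i, rfl, hi⟩
  have hdeg2 : ∀ i, 1 ≤ i → i ≤ ℓ - 1 → G.degree (c.getVert i) = 2 := fun i h1 h2 =>
    hdeg _ (hmem i (by omega)) (hnex i h1 h2)
  have hadj : ∀ i, i < ℓ → G.Adj (c.getVert i) (c.getVert (i + 1)) := fun i hi =>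
    c.adj_getVert_succ hi
  have hpairne : ∀ i, 1 ≤ i → i ≤ ℓ - 1 → c.getVert (i - 1) ≠ c.getVert (i + 1) := by
    intro i h1 h2 h
    rcases Nat.lt_or_ge (i + 1) ℓ with h' | h'
    · have := hinj (i - 1) (i + 1) (by omega) (by omega) h
      omega
    · have hi1 : i + 1 = ℓ := by omega
      have h4 : c.getVert (i + 1) = x := by rw [hi1, hxl]
      exact hnex (i - 1) (by omega) (by omega) (h.trans h4)
  have hN : ∀ i, 1 ≤ i → i ≤ ℓ - 1 →
      G.neighborFinset (c.getVert i) = {c.getVert (i - 1), c.getVert (i + 1)} := by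
    intro i h1 h2
    have hsub : ({c.getVert (i - 1), c.getVert (i + 1)} : Finset V)
        ⊆ G.neighborFinset (c.getVert i) := by
      intro w hw
      rw [SimpleGraph.mem_neighborFinset]
      rcases Finset.mem_insert.mp hw with rfl | hw
      · have h3 := hadj (i - 1) (by omega)
        rw [Nat.sub_add_cancel h1] at h3
        exact h3.symm
      · rw [Finset.mem_singleton] at hw
        subst hw
        exact hadj i (by omega)
    have hcard : (G.neighborFinset (c.getVert i)).card ≤
        ({c.getVert (i - 1), c.getVert (i + 1)} : Finset V).card := by
      rw [SimpleGraph.card_neighborFinset_eq_degree, hdeg2 i h1 h2,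
        Finset.card_insert_of_notMem (by simp [hpairne i h1 h2]), Finset.card_singleton]
    exact (Finset.eq_of_subset_of_card_le hsub hcard).symm
  -- interior facts
  have hIntMem : ∀ i, 2 ≤ i → i ≤ ℓ - 2 → c.getVert i ∈ Int := fun i h1 h2 =>
    ⟨i, h1, h2, rfl⟩
  have hIntIdx : ∀ i, i ≤ ℓ - 1 → c.getVert i ∈ Int → 2 ≤ i ∧ i ≤ ℓ - 2 := by
    rintro i hi ⟨j, hj1, hj2, hj3⟩
    have := hinj i j hi (by omega) hj3
    omega
  have hxNI : x ∉ Int := by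
    intro hx
    rw [← hx0] at hx
    have := hIntIdx 0 (by omega) hx
    omega
  have h1NI : c.getVert 1 ∉ Int := by
    intro hx
    have := hIntIdx 1 (by omega) hx
    omega
  have hl1NI : c.getVert (ℓ - 1) ∉ Int := by
    intro hx
    have := hIntIdx (ℓ - 1) le_rfl hx
    omega
  set W : Set V := Intᶜ with hWdef
  have hxW : x ∈ W := hxNI
  have h1W : c.getVert 1 ∈ W := h1NI
  have hl1W : c.getVert (ℓ - 1) ∈ W := hl1NI
  have hWmem : ∀ w : ↥W, w.val ∉ Int := fun w => w.prop
  letI : DecidableEq ↥W := fun a b => propDecidable (a = b)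
  set G' := G.induce W with hG'def
  have hN1 : G.neighborFinset (c.getVert 1) = {x, c.getVert 2} := by
    have h := hN 1 le_rfl (by omega)
    norm_num at h
    exact h
  have hNl : G.neighborFinset (c.getVert (ℓ - 1)) = {c.getVert (ℓ - 2), x} := by
    have h := hN (ℓ - 1) (by omega) le_rfl
    have e1 : ℓ - 1 - 1 = ℓ - 2 := by omega
    have e2 : ℓ - 1 + 1 = ℓ := by omega
    rw [e1, e2, hxl] at h
    exact h
  have hbridge : ∀ w ∈ Int, ∀ u, G.Adj w u → u ∉ Int →
      u = c.getVert 1 ∨ u = c.getVert (ℓ - 1) := by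
    rintro w ⟨i, hi1, hi2, rfl⟩ u hadj' hu
    have hmemN : u ∈ G.neighborFinset (c.getVert i) := by
      rw [SimpleGraph.mem_neighborFinset]; exact hadj'
    rw [hN i (by omega) (by omega)] at hmemN
    rcases Finset.mem_insert.mp hmemN with rfl | hmemN
    · by_cases h3 : 2 ≤ i - 1
      · exact absurd (hIntMem (i - 1) h3 (by omega)) hu
      · left
        have : i - 1 = 1 := by omega
        rw [this]
    · rw [Finset.mem_singleton] at hmemN
      subst hmemN
      by_cases h3 : i + 1 ≤ ℓ - 2
      · exact absurd (hIntMem (i + 1) (by omega) h3) hu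
      · right
        have : i + 1 = ℓ - 1 := by omega
        rw [this]
  ----------------------------------------------------------------
  -- PART 1 : gamma2
  ----------------------------------------------------------------
  have hne1 : {k | ∃ S : Finset ↥W, IsTwoDomSet G' S ∧ S.card = k}.Nonempty :=
    ⟨_, Finset.univ, fun v hv => absurd (Finset.mem_univ v) hv, rfl⟩
  obtain ⟨S', hS'dom, hS'card⟩ := Nat.sInf_mem hne1
  have hg'eq : gamma2 G' = S'.card := hS'card.symm
  have hleaf : ∀ u : ↥W, u.val = c.getVert 1 ∨ u.val = c.getVert (ℓ - 1) → u ∈ S' := by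
    intro u hu
    by_contra hnot
    have h2 := hS'dom u hnot
    have hsub : G'.neighborFinset u ⊆ {(⟨x, hxW⟩ : ↥W)} := by
      intro w hw
      rw [SimpleGraph.mem_neighborFinset] at hw
      have hw' : G.Adj u.val w.val := hw
      rw [Finset.mem_singleton]
      rcases hu with hu | hu <;> rw [hu] at hw'
      · have h3 : w.val ∈ G.neighborFinset (c.getVert 1) := by
          rw [SimpleGraph.mem_neighborFinset]; exact hw'
        rw [hN1] at h3
        rcases Finset.mem_insert.mp h3 with h4 | h4
        · exact Subtype.ext h4
        · rw [Finset.mem_singleton] at h4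
          exact absurd (h4 ▸ hIntMem 2 le_rfl (by omega)) (hWmem w)
      · have h3 : w.val ∈ G.neighborFinset (c.getVert (ℓ - 1)) := by
          rw [SimpleGraph.mem_neighborFinset]; exact hw'
        rw [hNl] at h3
        rcases Finset.mem_insert.mp h3 with h4 | h4
        · exact absurd (h4 ▸ hIntMem (ℓ - 2) (by omega) le_rfl) (hWmem w)
        · rw [Finset.mem_singleton] at h4
          exact Subtype.ext h4
    have h5 : (G'.neighborFinset u ∩ S').card ≤ 1 := by
      calc (G'.neighborFinset u ∩ S').card
          ≤ ({(⟨x, hxW⟩ : ↥W)} : Finset ↥W).card :=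
            Finset.card_le_card ((Finset.inter_subset_left).trans hsub)
        _ = 1 := Finset.card_singleton _
    exact absurd (h2.trans h5) (by norm_num)
  set O : Finset V := (Finset.range ((ℓ - 4) / 2)).image (fun k => c.getVert (2 * k + 3))
    with hOdef
  set S : Finset V := S'.image Subtype.val ∪ O with hSdef
  have hOddS : ∀ j, 1 ≤ j → j ≤ ℓ - 1 → j % 2 = 1 → c.getVert j ∈ S := by
    intro j hj1 hj2 hj3
    by_cases h1 : j = 1
    · subst h1
      exact Finset.mem_union_left _
        (Finset.mem_image_of_mem _ (hleaf ⟨c.getVert 1, h1W⟩ (Or.inl rfl)))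
    by_cases h2 : j = ℓ - 1
    · subst h2
      exact Finset.mem_union_left _
        (Finset.mem_image_of_mem _ (hleaf ⟨c.getVert (ℓ - 1), hl1W⟩ (Or.inr rfl)))
    · apply Finset.mem_union_right
      rw [hOdef]
      refine Finset.mem_image.mpr ⟨(j - 3) / 2, Finset.mem_range.mpr (by omega), ?_⟩
      exact congrArg c.getVert (by omega)
  have hSdom : IsTwoDomSet G S := by
    intro v hv
    by_cases hvI : v ∈ Int
    · rw [hIntdef] at hvI
      obtain ⟨i, hi1, hi2, rfl⟩ := hvI
      rcases Nat.even_or_odd i with hie | hio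
      · have hie' : i % 2 = 0 := Nat.even_iff.mp hie
        have hsub2 : ({c.getVert (i - 1), c.getVert (i + 1)} : Finset V)
            ⊆ G.neighborFinset (c.getVert i) ∩ S := by
          intro w hw
          rw [Finset.mem_inter]
          refine ⟨?_, ?_⟩
          · rw [hN i (by omega) (by omega)]
            exact hw
          · rcases Finset.mem_insert.mp hw with rfl | hw
            · exact hOddS (i - 1) (by omega) (by omega) (by omega)
            · rw [Finset.mem_singleton] at hw
              subst hw
              exact hOddS (i + 1) (by omega) (by omega) (by omega)
        calc 2 = ({c.getVert (i - 1), c.getVert (i + 1)} : Finset V).card := by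
              rw [Finset.card_insert_of_notMem
                (by simp [hpairne i (by omega) (by omega)]), Finset.card_singleton]
          _ ≤ _ := Finset.card_le_card hsub2
      · exfalso
        apply hv
        exact hOddS i (by omega) (by omega) (Nat.odd_iff.mp hio)
    · have hvW2 : v ∈ W := hvI
      have hu : (⟨v, hvW2⟩ : ↥W) ∉ S' := fun h =>
        hv (Finset.mem_union_left _ (Finset.mem_image_of_mem _ h))
      have h2 := hS'dom _ hu
      have himg : (G'.neighborFinset ⟨v, hvW2⟩ ∩ S').image Subtype.val
          ⊆ G.neighborFinset v ∩ S := by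
        intro w hw
        obtain ⟨w', hw', rfl⟩ := Finset.mem_image.mp hw
        obtain ⟨hw1, hw2⟩ := Finset.mem_inter.mp hw'
        refine Finset.mem_inter.mpr
          ⟨?_, Finset.mem_union_left _ (Finset.mem_image_of_mem _ hw2)⟩
        rw [SimpleGraph.mem_neighborFinset] at hw1 ⊢
        exact hw1
      calc 2 ≤ (G'.neighborFinset ⟨v, hvW2⟩ ∩ S').card := h2
        _ = ((G'.neighborFinset ⟨v, hvW2⟩ ∩ S').image Subtype.val).card :=
            (Finset.card_image_of_injective _ Subtype.val_injective).symm
        _ ≤ _ := Finset.card_le_card himg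
  have part1 : gamma2 G ≤ gamma2 G' + (ℓ - 4) / 2 := by
    have h1 : gamma2 G ≤ S.card := Nat.sInf_le ⟨S, hSdom, rfl⟩
    have h2 : S.card ≤ S'.card + (ℓ - 4) / 2 := by
      calc S.card ≤ (S'.image Subtype.val).card + O.card := Finset.card_union_le _ _
        _ ≤ S'.card + (ℓ - 4) / 2 := by
            refine Nat.add_le_add ?_ ?_
            · rw [Finset.card_image_of_injective _ Subtype.val_injective]
            · exact Finset.card_image_le.trans (by rw [Finset.card_range])
    rw [hg'eq]
    omega
  ----------------------------------------------------------------
  -- PART 2 : annihilation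
  ----------------------------------------------------------------
  have hbdd' : BddAbove {k | ∃ S : Finset ↥W, IsAnnSet G' S ∧ S.card = k} := by
    refine ⟨Fintype.card ↥W, ?_⟩
    rintro k ⟨T, -, rfl⟩
    exact Finset.card_le_univ T
  have hne2 : {k | ∃ S : Finset ↥W, IsAnnSet G' S ∧ S.card = k}.Nonempty :=
    ⟨0, ∅, by simp [IsAnnSet], rfl⟩
  obtain ⟨T', hT'ann, hT'card⟩ := Nat.sSup_mem hne2 hbdd'
  have ha'eq : annihilation G' = T'.card := hT'card.symm
  set IntF : Finset V := Finset.univ.filter (fun y => y ∈ Int) with hIntFdef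
  have hIntFmem : ∀ y, y ∈ IntF ↔ y ∈ Int := by
    intro y
    simp [hIntFdef]
  -- degree comparison
  have hdegle : ∀ u : ↥W, G.degree u.val ≤ G'.degree u +
      (if u.val = c.getVert 1 ∨ u.val = c.getVert (ℓ - 1) then 1 else 0) := by
    intro u
    have hA : (G.neighborFinset u.val \ IntF).card ≤ G'.degree u := by
      have hsub : G.neighborFinset u.val \ IntF ⊆ (G'.neighborFinset u).image Subtype.val := by
        intro w hw
        obtain ⟨hw1, hw2⟩ := Finset.mem_sdiff.mp hw
        rw [SimpleGraph.mem_neighborFinset] at hw1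
        have hwW : w ∈ W := fun h => hw2 ((hIntFmem w).mpr h)
        refine Finset.mem_image.mpr ⟨⟨w, hwW⟩, ?_, rfl⟩
        rw [SimpleGraph.mem_neighborFinset]
        exact hw1
      calc (G.neighborFinset u.val \ IntF).card
          ≤ ((G'.neighborFinset u).image Subtype.val).card := Finset.card_le_card hsub
        _ = G'.degree u := by
            rw [Finset.card_image_of_injective _ Subtype.val_injective]
            rfl
    have hB : (G.neighborFinset u.val ∩ IntF).card ≤
        (if u.val = c.getVert 1 ∨ u.val = c.getVert (ℓ - 1) then 1 else 0) := by
      by_cases hcases : u.val = c.getVert 1 ∨ u.val = c.getVert (ℓ - 1)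
      · rw [if_pos hcases]
        rcases hcases with h | h
        · rw [h, hN1]
          have hsub2 : ({x, c.getVert 2} : Finset V) ∩ IntF ⊆ {c.getVert 2} := by
            intro w hw
            obtain ⟨hw1, hw2⟩ := Finset.mem_inter.mp hw
            rcases Finset.mem_insert.mp hw1 with rfl | h4
            · exact absurd ((hIntFmem w).mp hw2) hxNI
            · exact h4
          calc _ ≤ ({c.getVert 2} : Finset V).card := Finset.card_le_card hsub2
            _ = 1 := Finset.card_singleton _
        · rw [h, hNl]
          have hsub2 : ({c.getVert (ℓ - 2), x} : Finset V) ∩ IntF ⊆ {c.getVert (ℓ - 2)} := by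
            intro w hw
            obtain ⟨hw1, hw2⟩ := Finset.mem_inter.mp hw
            rcases Finset.mem_insert.mp hw1 with rfl | h4
            · exact Finset.mem_singleton_self _
            · rw [Finset.mem_singleton] at h4
              rw [h4] at hw2
              exact absurd ((hIntFmem _).mp hw2) hxNI
          calc _ ≤ ({c.getVert (ℓ - 2)} : Finset V).card := Finset.card_le_card hsub2
            _ = 1 := Finset.card_singleton _
      · rw [if_neg hcases]
        have hempty : G.neighborFinset u.val ∩ IntF = ∅ := by
          rw [Finset.eq_empty_iff_forall_notMem]
          intro w hw
          obtain ⟨hw1, hw2⟩ := Finset.mem_inter.mp hw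
          rw [SimpleGraph.mem_neighborFinset] at hw1
          exact hcases (hbridge w ((hIntFmem w).mp hw2) u.val hw1.symm (hWmem u))
        rw [hempty, Finset.card_empty]
    have hsplitle : G.degree u.val ≤
        (G.neighborFinset u.val \ IntF).card + (G.neighborFinset u.val ∩ IntF).card := by
      have hsplit : G.neighborFinset u.val =
          (G.neighborFinset u.val \ IntF) ∪ (G.neighborFinset u.val ∩ IntF) :=
        (Finset.sdiff_union_inter _ _).symm
      calc G.degree u.val = (G.neighborFinset u.val).card := rfl
        _ = ((G.neighborFinset u.val \ IntF) ∪ (G.neighborFinset u.val ∩ IntF)).card := by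
            rw [← hsplit]
        _ ≤ _ := Finset.card_union_le _ _
    exact hsplitle.trans (Nat.add_le_add hA hB)
  -- edge count
  have hm : G'.edgeFinset.card + (ℓ - 2) ≤ G.edgeFinset.card := by
    set F : Finset (Sym2 V) :=
      (Finset.range (ℓ - 2)).image (fun k => s(c.getVert (k + 1), c.getVert (k + 2)))
      with hFdef
    have hFcard : F.card = ℓ - 2 := by
      rw [hFdef, Finset.card_image_of_injOn, Finset.card_range]
      intro k hk j hj h
      rw [Finset.mem_coe, Finset.mem_range] at hk hj
      rw [Sym2.eq_iff] at h
      rcases h with ⟨h1, h2⟩ | ⟨h1, h2⟩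
      · have := hinj (k + 1) (j + 1) (by omega) (by omega) h1
        omega
      · have e1 := hinj (k + 1) (j + 2) (by omega) (by omega) h1
        have e2 := hinj (k + 2) (j + 1) (by omega) (by omega) h2
        omega
    have hFsub : F ⊆ G.edgeFinset := by
      intro e he
      rw [hFdef, Finset.mem_image] at he
      obtain ⟨k, hk, rfl⟩ := he
      rw [Finset.mem_range] at hk
      rw [SimpleGraph.mem_edgeFinset, SimpleGraph.mem_edgeSet]
      exact hadj (k + 1) (by omega)
    set IM : Finset (Sym2 V) := G'.edgeFinset.image (Sym2.map Subtype.val) with hIMdef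
    have hIMcard : IM.card = G'.edgeFinset.card :=
      Finset.card_image_of_injective _ (Sym2.map.injective Subtype.val_injective)
    have hIMsub : IM ⊆ G.edgeFinset := by
      intro e he
      rw [hIMdef, Finset.mem_image] at he
      obtain ⟨e', he', rfl⟩ := he
      rw [SimpleGraph.mem_edgeFinset] at he' ⊢
      induction e' using Sym2.ind with
      | _ a b =>
        rw [SimpleGraph.mem_edgeSet] at he'
        rw [Sym2.map_pair_eq, SimpleGraph.mem_edgeSet]
        exact he'
    have hIMnoInt : ∀ e ∈ IM, ∀ y ∈ Int, ¬ y ∈ e := by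
      intro e he y hy hmem'
      rw [hIMdef, Finset.mem_image] at he
      obtain ⟨e', -, rfl⟩ := he
      induction e' using Sym2.ind with
      | _ a b =>
        rw [Sym2.map_pair_eq, Sym2.mem_iff] at hmem'
        rcases hmem' with rfl | rfl
        · exact hWmem a hy
        · exact hWmem b hy
    have hdisjF : Disjoint IM F := by
      rw [Finset.disjoint_right]
      intro e heF heIM
      rw [hFdef, Finset.mem_image] at heF
      obtain ⟨k, hk, rfl⟩ := heF
      rw [Finset.mem_range] at hk
      by_cases h0 : k = 0
      · subst h0
        exact hIMnoInt _ heIM (c.getVert 2) (hIntMem 2 le_rfl (by omega))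
          (by rw [Sym2.mem_iff]; norm_num)
      · exact hIMnoInt _ heIM (c.getVert (k + 1)) (hIntMem (k + 1) (by omega) (by omega))
          (by rw [Sym2.mem_iff]; left; rfl)
    calc G'.edgeFinset.card + (ℓ - 2) = IM.card + F.card := by rw [hIMcard, hFcard]
      _ = (IM ∪ F).card := (Finset.card_union_of_disjoint hdisjF).symm
      _ ≤ G.edgeFinset.card := Finset.card_le_card (Finset.union_subset hIMsub hFsub)
  -- the even interior vertices
  set E : Finset V := (Finset.range ((ℓ - 4) / 2)).image (fun k => c.getVert (2 * k + 2))
    with hEdef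
  have hEcard : E.card = (ℓ - 4) / 2 := by
    rw [hEdef, Finset.card_image_of_injOn, Finset.card_range]
    intro k hk j hj h
    rw [Finset.mem_coe, Finset.mem_range] at hk hj
    have := hinj (2 * k + 2) (2 * j + 2) (by omega) (by omega) h
    omega
  have hEInt : ∀ y ∈ E, y ∈ Int := by
    intro y hy
    rw [hEdef, Finset.mem_image] at hy
    obtain ⟨k, hk, rfl⟩ := hy
    rw [Finset.mem_range] at hk
    exact hIntMem (2 * k + 2) (by omega) (by omega)
  have hEdeg : ∀ y ∈ E, G.degree y = 2 := by
    intro y hy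
    rw [hEdef, Finset.mem_image] at hy
    obtain ⟨k, hk, rfl⟩ := hy
    rw [Finset.mem_range] at hk
    exact hdeg2 (2 * k + 2) (by omega) (by omega)
  set T : Finset V := T'.image Subtype.val ∪ E with hTdef
  have hdisjT : Disjoint (T'.image Subtype.val) E := by
    rw [Finset.disjoint_left]
    intro y hy hyE
    rw [Finset.mem_image] at hy
    obtain ⟨u, -, rfl⟩ := hy
    exact hWmem u (hEInt _ hyE)
  have hsum_ite : (∑ u ∈ T', (if u.val = c.getVert 1 ∨ u.val = c.getVert (ℓ - 1)
      then 1 else 0)) ≤ 2 := by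
    rw [Finset.sum_boole, Nat.cast_id]
    have hsub : T'.filter (fun u => u.val = c.getVert 1 ∨ u.val = c.getVert (ℓ - 1))
        ⊆ {(⟨c.getVert 1, h1W⟩ : ↥W), ⟨c.getVert (ℓ - 1), hl1W⟩} := by
      intro u hu
      rcases (Finset.mem_filter.mp hu).2 with h | h
      · exact Finset.mem_insert.mpr (Or.inl (Subtype.ext h))
      · exact Finset.mem_insert.mpr (Or.inr (Finset.mem_singleton.mpr (Subtype.ext h)))
    calc _ ≤ ({(⟨c.getVert 1, h1W⟩ : ↥W), ⟨c.getVert (ℓ - 1), hl1W⟩} : Finset ↥W).card :=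
          Finset.card_le_card hsub
      _ ≤ 2 := (Finset.card_insert_le _ _).trans (by simp)
  have hTann : IsAnnSet G T := by
    show (∑ v ∈ T, G.degree v) ≤ G.edgeFinset.card
    have hsum1 : (∑ v ∈ T, G.degree v) =
        (∑ v ∈ T'.image Subtype.val, G.degree v) + ∑ v ∈ E, G.degree v := by
      rw [hTdef, Finset.sum_union hdisjT]
    have hsum2 : (∑ v ∈ T'.image Subtype.val, G.degree v) = ∑ u ∈ T', G.degree u.val :=
      Finset.sum_image (fun a _ b _ h => Subtype.val_injective h)
    have hsum3 : (∑ u ∈ T', G.degree u.val) ≤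
        (∑ u ∈ T', G'.degree u) + ∑ u ∈ T', (if u.val = c.getVert 1 ∨
          u.val = c.getVert (ℓ - 1) then 1 else 0) := by
      rw [← Finset.sum_add_distrib]
      exact Finset.sum_le_sum (fun u _ => hdegle u)
    have hsum4 : (∑ v ∈ E, G.degree v) = E.card * 2 := Finset.sum_const_nat hEdeg
    have hann' : (∑ u ∈ T', G'.degree u) ≤ G'.edgeFinset.card := hT'ann
    rw [hsum1, hsum2, hsum4, hEcard]
    have : (ℓ - 4) / 2 * 2 = ℓ - 4 := by omega
    rw [this]
    omega
  have part2 : annihilation G' + (ℓ - 4) / 2 ≤ annihilation G := by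
    have hbddG : BddAbove {k | ∃ S : Finset V, IsAnnSet G S ∧ S.card = k} := by
      refine ⟨Fintype.card V, ?_⟩
      rintro k ⟨T2, -, rfl⟩
      exact Finset.card_le_univ T2
    have hT : T.card ≤ annihilation G := le_csSup hbddG ⟨T, hTann, rfl⟩
    have hTcard : T.card = T'.card + (ℓ - 4) / 2 := by
      rw [hTdef, Finset.card_union_of_disjoint hdisjT,
        Finset.card_image_of_injective _ Subtype.val_injective, hEcard]
    rw [ha'eq]
    omega
  refine ⟨part1, part2, fun h => ?_⟩
  omega
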